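/- The contraction of a Cohen–Macaulay simplicial complex is Cohen–Macaulay. -/

import Mathlib

open Finset

/-- An abstract simplicial complex on vertex type `V`: a downward closed
family of finite subsets of `V`. -/
structure AbstractComplex (V : Type*) where
  faces : Set (Finset V)
  down_closed : ∀ {s t : Finset V}, s ∈ faces → t ⊆ s → t ∈ faces

namespace AbstractComplex

variable {V : Type*}

/-- A facet is a maximal face. -/
def IsFacet (Δ : AbstractComplex V) (s : Finset V) : Prop :=
  s ∈ Δ.faces ∧ ∀ t ∈ Δ.faces, s ⊆ t → s = t

/-- A complex is pure if all facets have the same cardinality. -/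
def IsPure (Δ : AbstractComplex V) : Prop :=
  ∀ s t : Finset V, Δ.IsFacet s → Δ.IsFacet t → s.card = t.card

/-- The link of a (potential) face `F`. -/
def link [DecidableEq V] (Δ : AbstractComplex V) (F : Finset V) : AbstractComplex V where
  faces := {G | G ∩ F = ∅ ∧ G ∪ F ∈ Δ.faces}
  down_closed := by
    rintro s t ⟨h1, h2⟩ hts
    refine ⟨subset_empty.mp ?_, Δ.down_closed h2 (union_subset_union hts subset_rfl)⟩
    exact h1 ▸ inter_subset_inter hts subset_rfl

/-- The faces of cardinality `q` (i.e. dimension `q - 1`). -/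
abbrev Face (Δ : AbstractComplex V) (q : ℕ) := {s : Finset V // s ∈ Δ.faces ∧ s.card = q}

/-- The simplicial boundary map on reduced chains with coefficients in `K`,
from chains spanned by faces of cardinality `q+1` to those spanned by faces of
cardinality `q`. -/
noncomputable def boundary (K : Type*) [Field K] [LinearOrder V]
    (Δ : AbstractComplex V) (q : ℕ) :
    (Δ.Face (q + 1) →₀ K) →ₗ[K] (Δ.Face q →₀ K) :=
  Finsupp.lsum K fun s => LinearMap.toSpanSingleton K _
    (∑ x ∈ s.1.attach,
      ((-1 : K) ^ (s.1.filter (fun y => y < x.1)).card) •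
        Finsupp.single (⟨s.1.erase x.1,
          Δ.down_closed s.2.1 (erase_subset _ _), by
            rw [card_erase_of_mem x.2, s.2.2]; omega⟩ : Δ.Face q) (1 : K))

/-- `Δ.RHTriv K i` says that the `i`-th reduced simplicial homology of `Δ`
with coefficients in `K` vanishes. -/
def RHTriv (K : Type*) [Field K] [LinearOrder V] (Δ : AbstractComplex V) : ℤ → Prop
  | Int.ofNat i =>
      LinearMap.ker (Δ.boundary K i) ≤ LinearMap.range (Δ.boundary K (i + 1))
  | Int.negSucc 0 => ⊤ ≤ LinearMap.range (Δ.boundary K 0)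
  | Int.negSucc (_ + 1) => True

/-- `Δ.dimLT i` means `i < dim Δ`. -/
def dimLT (Δ : AbstractComplex V) (i : ℤ) : Prop :=
  ∃ s ∈ Δ.faces, i + 2 ≤ (s.card : ℤ)

/-- Cohen–Macaulayness over `K`, via Reisner's criterion. -/
def IsCM (K : Type*) [Field K] [LinearOrder V] (Δ : AbstractComplex V) : Prop :=
  ∀ F ∈ Δ.faces, ∀ i : ℤ, (Δ.link F).dimLT i → (Δ.link F).RHTriv K i

/-- `CM_t`: pure, and the link of every face of cardinality at least `t`
is Cohen–Macaulay. -/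
def IsCMt (K : Type*) [Field K] [LinearOrder V] (t : ℕ) (Δ : AbstractComplex V) : Prop :=
  Δ.IsPure ∧ ∀ F ∈ Δ.faces, t ≤ F.card → IsCM K (Δ.link F)

/-- Buchsbaum-ness: pure and the reduced homology of the link of every nonempty
face vanishes below its dimension. -/
def IsBuchsbaum (K : Type*) [Field K] [LinearOrder V] (Δ : AbstractComplex V) : Prop :=
  Δ.IsPure ∧ ∀ G ∈ Δ.faces, G ≠ ∅ →
    ∀ i : ℤ, (Δ.link G).dimLT i → (Δ.link G).RHTriv K i

end AbstractComplex

/-- The expansion `F^α` of a finite vertex set. -/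
def expandSet {V : Type*} (α : V → ℕ) (F : Finset V) : Finset (Σ i, Fin (α i)) :=
  F.sigma fun _ => Finset.univ

namespace AbstractComplex

/-- The expansion `Δ^α` of a simplicial complex: the complex generated by the
expansions of the facets of `Δ`. -/
def expand {V : Type*} (Δ : AbstractComplex V) (α : V → ℕ) :
    AbstractComplex (Σ i, Fin (α i)) where
  faces := {σ | ∃ F, Δ.IsFacet F ∧ σ ⊆ expandSet α F}
  down_closed := fun ⟨F, hF, hsub⟩ hts => ⟨F, hF, hts.trans hsub⟩

end AbstractComplex

/-- A linear order on the expanded vertex set (lexicographic). -/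
noncomputable instance sigmaFinLinearOrder {V : Type*} [LinearOrder V] {α : V → ℕ} :
    LinearOrder (Σ i, Fin (α i)) :=
  LinearOrder.lift' (toLex : (Σ i, Fin (α i)) → Σₗ i, Fin (α i)) toLex.injective

namespace AbstractComplex

variable {V : Type*}

/-- Two vertices are equivalent iff they lie in exactly the same facets. -/
def contractSetoid (Δ : AbstractComplex V) : Setoid V where
  r x y := ∀ F : Finset V, Δ.IsFacet F → (x ∈ F ↔ y ∈ F)
  iseqv := ⟨fun _ _ _ => Iff.rfl, fun h F hF => (h F hF).symm,
    fun h1 h2 F hF => (h1 F hF).trans (h2 F hF)⟩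

/-- The contraction of `Δ`: the complex on the equivalence classes of vertices,
whose facets are the images of the facets of `Δ`. -/
def contraction (Δ : AbstractComplex V) : AbstractComplex (Quotient Δ.contractSetoid) where
  faces := {σ | ∃ F : Finset V, Δ.IsFacet F ∧
    ∀ y ∈ σ, ∃ x ∈ F, Quotient.mk Δ.contractSetoid x = y}
  down_closed := fun ⟨F, hF, h⟩ hts => ⟨F, hF, fun y hy => h y (hts hy)⟩

/-- The size of an equivalence class of vertices: the components of the vector
obtained from contraction. -/
noncomputable def classSize (Δ : AbstractComplex V) (y : Quotient Δ.contractSetoid) : ℕ :=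
  Nat.card {x : V // Quotient.mk Δ.contractSetoid x = y}

end AbstractComplex

noncomputable instance quotLinearOrder {V : Type*} [LinearOrder V] {s : Setoid V} :
    LinearOrder (Quotient s) :=
  LinearOrder.lift' Quotient.out Quotient.out_injective

section Aux

namespace AbstractComplex

variable {V : Type*} [LinearOrder V] {K : Type*} [Field K]

open scoped Classical in
/-- The term of the boundary sum corresponding to erasing `v` from `s`. -/
noncomputable def eterm (K : Type*) [Field K] (Δ : AbstractComplex V) (q : ℕ)
    (s : Finset V) (v : V) : Δ.Face q →₀ K :=
  if h : s.erase v ∈ Δ.faces ∧ (s.erase v).card = q then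
    ((-1 : K) ^ (s.filter (fun z => z < v)).card) • Finsupp.single ⟨s.erase v, h⟩ 1
  else 0

lemma eterm_of_mem (Δ : AbstractComplex V) (q : ℕ) {s : Finset V} (hs : s ∈ Δ.faces)
    (hcard : s.card = q + 1) {v : V} (hv : v ∈ s) :
    eterm K Δ q s v = ((-1 : K) ^ (s.filter (fun z => z < v)).card) •
      Finsupp.single (⟨s.erase v, Δ.down_closed hs (Finset.erase_subset _ _), by
        simp [Finset.card_erase_of_mem hv, hcard]⟩ : Δ.Face q) 1 := by
  have h : s.erase v ∈ Δ.faces ∧ (s.erase v).card = q :=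
    ⟨Δ.down_closed hs (Finset.erase_subset _ _), by
      simp [Finset.card_erase_of_mem hv, hcard]⟩
  rw [eterm, dif_pos h]

lemma boundary_single (Δ : AbstractComplex V) (q : ℕ) (s : Δ.Face (q + 1)) (k : K) :
    Δ.boundary K q (Finsupp.single s k) = k • ∑ v ∈ s.1, eterm K Δ q s.1 v := by
  rw [boundary, Finsupp.lsum_single, LinearMap.toSpanSingleton_apply]
  congr 1
  rw [← Finset.sum_attach s.1 (fun v => eterm K Δ q s.1 v)]
  refine Finset.sum_congr rfl fun x hx => ?_
  rw [eterm_of_mem Δ q s.2.1 s.2.2 x.2]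

end AbstractComplex

end Aux
namespace AbstractComplex

variable {V : Type*} [LinearOrder V] {K : Type*} [Field K]

lemma filter_lt_erase_card {s : Finset V} {v : V} (hv : v ∈ s) (u : V) :
    (s.filter (fun z => z < u)).card =
      ((s.erase v).filter (fun z => z < u)).card + (if v < u then 1 else 0) := by
  rw [Finset.filter_erase]
  by_cases h : v < u
  · have hmem : v ∈ s.filter (fun z => z < u) := Finset.mem_filter.2 ⟨hv, h⟩
    rw [if_pos h, Finset.card_erase_of_mem hmem]
    have : 0 < (s.filter (fun z => z < u)).card := Finset.card_pos.2 ⟨v, hmem⟩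
    omega
  · have hmem : v ∉ s.filter (fun z => z < u) := fun hm => h (Finset.mem_filter.1 hm).2
    rw [if_neg h, Finset.erase_eq_of_notMem hmem, Nat.add_zero]

lemma filter_lt_insert_card {s : Finset V} {y : V} (hy : y ∉ s) (u : V) :
    ((insert y s).filter (fun z => z < u)).card =
      (s.filter (fun z => z < u)).card + (if y < u then 1 else 0) := by
  rw [Finset.filter_insert]
  by_cases h : y < u
  · rw [if_pos h, if_pos h,
      Finset.card_insert_of_notMem (fun hm => hy (Finset.mem_filter.1 hm).1)]
  · rw [if_neg h, if_neg h, Nat.add_zero]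

lemma sign_antisymm {c d : ℕ} {u v : V} (huv : u ≠ v) :
    ((-1 : K) ^ (d + (if u < v then 1 else 0)) * (-1 : K) ^ c) +
      ((-1 : K) ^ (c + (if v < u then 1 else 0)) * (-1 : K) ^ d) = 0 := by
  rcases lt_or_gt_of_ne huv with h | h
  · rw [if_pos h, if_neg (asymm h)]; rw [pow_add, pow_add]; ring
  · rw [if_neg (asymm h), if_pos h]; rw [pow_add, pow_add]; ring

lemma smul_cancel {M : Type*} [AddCommMonoid M] [Module K M] {a b : M} (h : a = b)
    {c₁ c₂ : K} (h2 : c₁ + c₂ = 0) : c₁ • a + c₂ • b = 0 := by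
  subst h; rw [← add_smul, h2, zero_smul]

lemma boundary_boundary (Δ : AbstractComplex V) (q : ℕ) (c : Δ.Face (q + 2) →₀ K) :
    Δ.boundary K q (Δ.boundary K (q + 1) c) = 0 := by
  induction c using Finsupp.induction_linear with
  | zero => simp
  | add f g hf hg => rw [map_add, map_add, hf, hg, add_zero]
  | single s k =>
    rw [boundary_single, map_smul, map_sum]
    have hface : ∀ v ∈ s.1, (s.1.erase v ∈ Δ.faces ∧ (s.1.erase v).card = q + 1) :=
      fun v hv => ⟨Δ.down_closed s.2.1 (Finset.erase_subset _ _), by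
        simp [Finset.card_erase_of_mem hv, s.2.2]⟩
    have hterm : ∀ v ∈ s.1, Δ.boundary K q (eterm K Δ (q+1) s.1 v) =
        ∑ u ∈ s.1, (if u ∈ s.1.erase v then
          ((-1 : K) ^ (s.1.filter (fun z => z < v)).card) • eterm K Δ q (s.1.erase v) u
          else 0) := by
      intro v hv
      rw [eterm_of_mem Δ (q+1) s.2.1 s.2.2 hv, map_smul,
        boundary_single Δ q ⟨s.1.erase v, hface v hv⟩ 1, one_smul, Finset.smul_sum,
        Finset.sum_ite_mem, Finset.inter_eq_right.2 (Finset.erase_subset _ _)]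
    rw [Finset.sum_congr rfl hterm, ← Finset.sum_product']
    have key : ∑ p ∈ s.1 ×ˢ s.1, (if p.2 ∈ s.1.erase p.1 then
        ((-1 : K) ^ (s.1.filter (fun z => z < p.1)).card) • eterm K Δ q (s.1.erase p.1) p.2
        else 0) = 0 := by
      apply Finset.sum_involution (fun p _ => (p.2, p.1))
      · intro p hp
        rcases Finset.mem_product.1 hp with ⟨h1, h2⟩
        by_cases hne : p.1 = p.2
        · rw [if_neg, if_neg, add_zero]
          · simp [hne]
          · simp [← hne]
        · rw [if_pos (Finset.mem_erase.2 ⟨Ne.symm hne, h2⟩),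
            if_pos (Finset.mem_erase.2 ⟨hne, h1⟩)]
          rw [eterm_of_mem Δ q (hface p.1 h1).1 (hface p.1 h1).2
              (Finset.mem_erase.2 ⟨Ne.symm hne, h2⟩),
            eterm_of_mem Δ q (hface p.2 h2).1 (hface p.2 h2).2
              (Finset.mem_erase.2 ⟨hne, h1⟩)]
          rw [smul_smul, smul_smul]
          refine smul_cancel ?_ ?_
          · congr 1
            exact Subtype.ext Finset.erase_right_comm
          · rw [filter_lt_erase_card (s := s.1) h2 p.1, filter_lt_erase_card (s := s.1) h1 p.2]
            exact sign_antisymm (Ne.symm hne)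
      · intro p hp hfne hcontra
        apply hfne
        have hpp : p.2 = p.1 := congrArg Prod.fst hcontra
        rw [if_neg]
        simp [Finset.mem_erase, hpp]
      · intro p hp
        rcases Finset.mem_product.1 hp with ⟨h1, h2⟩
        exact Finset.mem_product.2 ⟨h2, h1⟩
      · intro p hp
        rfl
    rw [key, smul_zero]

end AbstractComplex
namespace AbstractComplex

variable {V : Type*} [LinearOrder V] {K : Type*} [Field K]

section Maps

variable {Λ Λ' : AbstractComplex V}

/-- Inclusion of chains of a subcomplex. -/
noncomputable def incl (K : Type*) [Field K] (h : Λ'.faces ⊆ Λ.faces) (q : ℕ) :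
    (Λ'.Face q →₀ K) →ₗ[K] (Λ.Face q →₀ K) :=
  Finsupp.lmapDomain K K (fun s => ⟨s.1, h s.2.1, s.2.2⟩)

lemma incl_single (h : Λ'.faces ⊆ Λ.faces) (q : ℕ) (s : Λ'.Face q) (k : K) :
    incl K h q (Finsupp.single s k) = Finsupp.single ⟨s.1, h s.2.1, s.2.2⟩ k :=
  Finsupp.mapDomain_single

lemma incl_injective (h : Λ'.faces ⊆ Λ.faces) (q : ℕ) :
    Function.Injective (incl K h q) :=
  Finsupp.mapDomain_injective (fun a b hab => Subtype.ext (Subtype.mk_eq_mk.mp hab))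

lemma incl_boundary (h : Λ'.faces ⊆ Λ.faces) (q : ℕ) :
    Λ.boundary K q ∘ₗ incl K h (q+1) = incl K h q ∘ₗ Λ'.boundary K q := by
  apply Finsupp.lhom_ext
  intro s k
  simp only [LinearMap.comp_apply]
  rw [incl_single, boundary_single, boundary_single, map_smul, map_sum]
  congr 1
  refine Finset.sum_congr rfl fun v hv => ?_
  rw [eterm_of_mem Λ' q s.2.1 s.2.2 hv,
    eterm_of_mem Λ q (h s.2.1) s.2.2 hv, map_smul, incl_single]

open scoped Classical in
/-- Projection of chains killing faces containing `x`. -/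
noncomputable def proj (K : Type*) [Field K] (x : V)
    (hfaces : Λ'.faces = {s | s ∈ Λ.faces ∧ x ∉ s}) (q : ℕ) :
    (Λ.Face q →₀ K) →ₗ[K] (Λ'.Face q →₀ K) :=
  Finsupp.lsum K fun s => LinearMap.toSpanSingleton K _
    (if h : x ∉ s.1 then Finsupp.single ⟨s.1, by rw [hfaces]; exact ⟨s.2.1, h⟩, s.2.2⟩ 1
     else 0)

open scoped Classical in
/-- Retaining only faces containing `x`. -/
noncomputable def rho (K : Type*) [Field K] (Λ : AbstractComplex V) (x : V) (q : ℕ) :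
    (Λ.Face q →₀ K) →ₗ[K] (Λ.Face q →₀ K) :=
  Finsupp.lsum K fun s => LinearMap.toSpanSingleton K _
    (if x ∈ s.1 then Finsupp.single s 1 else 0)

lemma rho_single_mem {x : V} (q : ℕ) (s : Λ.Face q) (hx : x ∈ s.1) (k : K) :
    rho K Λ x q (Finsupp.single s k) = Finsupp.single s k := by
  classical
  rw [rho, Finsupp.lsum_single, LinearMap.toSpanSingleton_apply, if_pos hx,
    Finsupp.smul_single, smul_eq_mul, mul_one]

lemma rho_single_not_mem {x : V} (q : ℕ) (s : Λ.Face q) (hx : x ∉ s.1) (k : K) :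
    rho K Λ x q (Finsupp.single s k) = 0 := by
  classical
  rw [rho, Finsupp.lsum_single, LinearMap.toSpanSingleton_apply, if_neg hx, smul_zero]

lemma incl_proj_add_rho (x : V) (hfaces : Λ'.faces = {s | s ∈ Λ.faces ∧ x ∉ s}) (q : ℕ) :
    (incl K (fun s hs => by rw [hfaces] at hs; exact hs.1) q) ∘ₗ proj K x hfaces q
      + rho K Λ x q = LinearMap.id := by
  classical
  apply Finsupp.lhom_ext
  intro s k
  simp only [LinearMap.add_apply, LinearMap.comp_apply, LinearMap.id_apply]
  by_cases hx : x ∈ s.1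
  · rw [proj, Finsupp.lsum_single, LinearMap.toSpanSingleton_apply, dif_neg (by simpa using hx),
      smul_zero, map_zero, rho_single_mem q s hx, zero_add]
  · rw [proj, Finsupp.lsum_single, LinearMap.toSpanSingleton_apply, dif_pos hx,
      Finsupp.smul_single, smul_eq_mul, mul_one]
    exact (congrArg₂ (· + ·) (incl_single _ q _ k) (rho_single_not_mem q s hx k)).trans (add_zero _)

open scoped Classical in
/-- The chain homotopy for removing a dominated vertex. -/
noncomputable def Dmap (K : Type*) [Field K] (Λ : AbstractComplex V) (x y : V)
    (dom : ∀ s ∈ Λ.faces, x ∈ s → insert y s ∈ Λ.faces) (q : ℕ) :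
    (Λ.Face q →₀ K) →ₗ[K] (Λ.Face (q+1) →₀ K) :=
  Finsupp.lsum K fun s => LinearMap.toSpanSingleton K _
    (if h : x ∈ s.1 ∧ y ∉ s.1 then
      ((-1 : K) ^ (s.1.filter (fun z => z < y)).card) •
        Finsupp.single ⟨insert y s.1, dom s.1 s.2.1 h.1, by
          rw [Finset.card_insert_of_notMem h.2, s.2.2]⟩ 1
     else 0)

lemma Dmap_single_pos (Λ : AbstractComplex V) (x y : V)
    (dom : ∀ s ∈ Λ.faces, x ∈ s → insert y s ∈ Λ.faces) (q : ℕ)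
    (s : Λ.Face q) (hx : x ∈ s.1) (hy : y ∉ s.1) (k : K) :
    Dmap K Λ x y dom q (Finsupp.single s k) =
      (k * (-1 : K) ^ (s.1.filter (fun z => z < y)).card) •
        Finsupp.single ⟨insert y s.1, dom s.1 s.2.1 hx, by
          rw [Finset.card_insert_of_notMem hy, s.2.2]⟩ 1 := by
  classical
  rw [Dmap, Finsupp.lsum_single, LinearMap.toSpanSingleton_apply, dif_pos ⟨hx, hy⟩,
    smul_smul]

lemma Dmap_single_neg (Λ : AbstractComplex V) (x y : V)
    (dom : ∀ s ∈ Λ.faces, x ∈ s → insert y s ∈ Λ.faces) (q : ℕ)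
    (s : Λ.Face q) (h : ¬(x ∈ s.1 ∧ y ∉ s.1)) (k : K) :
    Dmap K Λ x y dom q (Finsupp.single s k) = 0 := by
  classical
  rw [Dmap, Finsupp.lsum_single, LinearMap.toSpanSingleton_apply, dif_neg h, smul_zero]

lemma Dmap_incl (x y : V) (hfaces : Λ'.faces = {s | s ∈ Λ.faces ∧ x ∉ s})
    (dom : ∀ s ∈ Λ.faces, x ∈ s → insert y s ∈ Λ.faces)
    (hsub : Λ'.faces ⊆ Λ.faces) (q : ℕ) :
    (Dmap K Λ x y dom q) ∘ₗ incl K hsub q = 0 := by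
  apply Finsupp.lhom_ext
  intro s k
  simp only [LinearMap.comp_apply, LinearMap.zero_apply]
  rw [incl_single, Dmap_single_neg]
  have hmem : (s.1 : Finset V) ∈ Λ.faces ∧ x ∉ (s.1 : Finset V) := by
    have h := s.2.1
    rw [Set.ext_iff] at hfaces
    exact (hfaces s.1).1 h
  exact fun hc => hmem.2 hc.1

end Maps

end AbstractComplex
namespace AbstractComplex

variable {V : Type*} [LinearOrder V] {K : Type*} [Field K]

lemma single_congr {Λ : AbstractComplex V} {q : ℕ} {a b : Λ.Face q}
    (h : (a : Finset V) = (b : Finset V)) (k : K) :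
    Finsupp.single a k = Finsupp.single b k := by
  congr 1; exact Subtype.ext h

lemma smul_single_eq {Λ : AbstractComplex V} {q : ℕ} {a b : Λ.Face q}
    (h : (a : Finset V) = (b : Finset V)) {c : K} (hc : c = 1) :
    c • Finsupp.single a (1:K) = Finsupp.single b 1 := by
  subst hc; rw [one_smul]; exact single_congr h 1

lemma smul_single_eq' {Λ : AbstractComplex V} {q : ℕ} {a b : Λ.Face q}
    (h : (a : Finset V) = (b : Finset V)) (c d : K) (hcd : c = d) :
    c • Finsupp.single a (1:K) = d • Finsupp.single b 1 := by
  subst hcd; rw [single_congr h]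

lemma erase_insert_of_ne' {s : Finset V} {y v : V} (h : v ≠ y) :
    (insert y s).erase v = insert y (s.erase v) := by
  ext z
  simp only [Finset.mem_erase, Finset.mem_insert]
  constructor
  · rintro ⟨hzv, hz | hz⟩
    · exact Or.inl hz
    · exact Or.inr ⟨hzv, hz⟩
  · rintro (hz | ⟨hzv, hz⟩)
    · exact ⟨by rw [hz]; exact Ne.symm h, Or.inl hz⟩
    · exact ⟨hzv, Or.inr hz⟩

lemma sign_cancel' {a b c d : ℕ} {u w : V} (huw : u ≠ w)
    (h1 : a = c + (if u < w then 1 else 0)) (h2 : b = d + (if w < u then 1 else 0)) :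
    ((-1 : K) ^ a * (-1 : K) ^ b) + ((-1 : K) ^ d * (-1 : K) ^ c) = 0 := by
  subst h1 h2
  rcases lt_or_gt_of_ne huw with h | h
  · rw [if_pos h, if_neg (asymm h)]; rw [pow_add, pow_add]; ring
  · rw [if_neg (asymm h), if_pos h]; rw [pow_add, pow_add]; ring

lemma boundary_single' (Δ : AbstractComplex V) (q : ℕ) {s : Finset V}
    (hs : s ∈ Δ.faces) (hc : s.card = q + 1) (k : K) :
    Δ.boundary K q (Finsupp.single ⟨s, hs, hc⟩ k) = k • ∑ v ∈ s, eterm K Δ q s v :=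
  boundary_single Δ q ⟨s, hs, hc⟩ k

lemma key_identity (Λ : AbstractComplex V) (x y : V) (hxy : x ≠ y)
    (dom : ∀ s ∈ Λ.faces, x ∈ s → insert y s ∈ Λ.faces) (q : ℕ) :
    rho K Λ x (q+1) ∘ₗ (Λ.boundary K (q+1) ∘ₗ Dmap K Λ x y dom (q+1)
      + Dmap K Λ x y dom q ∘ₗ Λ.boundary K q) = rho K Λ x (q+1) := by
  apply Finsupp.lhom_ext
  intro s k
  have hk : (Finsupp.single s k : Λ.Face (q+1) →₀ K) = k • Finsupp.single s 1 := by
    rw [Finsupp.smul_single, smul_eq_mul, mul_one]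
  rw [hk, map_smul, map_smul]
  congr 1
  simp only [LinearMap.comp_apply, LinearMap.add_apply, map_add]
  by_cases hx : x ∈ s.1
  · by_cases hy : y ∈ s.1
    · -- x ∈ s, y ∈ s
      rw [Dmap_single_neg _ _ _ _ _ s (fun hc => hc.2 hy), map_zero, map_zero, zero_add]
      rw [boundary_single, one_smul, map_sum, map_sum]
      rw [rho_single_mem _ s hx]
      rw [Finset.sum_eq_single_of_mem y hy]
      · have hface : s.1.erase y ∈ Λ.faces ∧ (s.1.erase y).card = q :=
          ⟨Λ.down_closed s.2.1 (Finset.erase_subset _ _), by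
            simp [Finset.card_erase_of_mem hy, s.2.2]⟩
        rw [eterm_of_mem Λ q s.2.1 s.2.2 hy, map_smul, map_smul,
          Dmap_single_pos Λ x y dom q ⟨s.1.erase y, hface⟩
            (Finset.mem_erase.2 ⟨hxy, hx⟩) (Finset.notMem_erase _ _), one_mul,
          map_smul, rho_single_mem _ _
            (Finset.mem_insert_of_mem (Finset.mem_erase.2 ⟨hxy, hx⟩)),
          smul_smul]
        refine smul_single_eq (Finset.insert_erase hy) ?_
        show ((-1:K) ^ (s.1.filter (fun z => z < y)).card *
          (-1:K) ^ ((s.1.erase y).filter (fun z => z < y)).card) = 1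
        rw [filter_lt_erase_card (s := s.1) hy y, if_neg (lt_irrefl y), Nat.add_zero,
          ← pow_add]
        exact Even.neg_one_pow ⟨_, rfl⟩
      · intro v hv hvy
        rw [eterm_of_mem Λ q s.2.1 s.2.2 hv, map_smul, map_smul,
          Dmap_single_neg _ _ _ _ _ _ (fun hc => hc.2 (Finset.mem_erase.2 ⟨Ne.symm hvy, hy⟩))]
        simp
    · -- x ∈ s, y ∉ s : the main case
      have ht : insert y s.1 ∈ Λ.faces := dom s.1 s.2.1 hx
      have htc : (insert y s.1).card = (q+1) + 1 := by
        rw [Finset.card_insert_of_notMem hy, s.2.2]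
      have hrx : rho K Λ x (q+1) (eterm K Λ (q+1) (insert y s.1) x) = 0 := by
        rw [eterm_of_mem Λ (q+1) ht htc (Finset.mem_insert_of_mem hx), map_smul,
          rho_single_not_mem _ _ (Finset.notMem_erase _ _), smul_zero]
      have hry : rho K Λ x (q+1) (eterm K Λ (q+1) (insert y s.1) y) =
          ((-1 : K) ^ (s.1.filter (fun z => z < y)).card) • Finsupp.single s 1 := by
        rw [eterm_of_mem Λ (q+1) ht htc (Finset.mem_insert_self y s.1), map_smul]
        rw [rho_single_mem _ _ (Finset.mem_erase.2 ⟨hxy, Finset.mem_insert_of_mem hx⟩)]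
        refine smul_single_eq' (Finset.erase_insert hy) _ _ ?_
        rw [filter_lt_insert_card hy y, if_neg (lt_irrefl y), Nat.add_zero]
      have hdx : rho K Λ x (q+1) (Dmap K Λ x y dom q (eterm K Λ q s.1 x)) = 0 := by
        rw [eterm_of_mem Λ q s.2.1 s.2.2 hx, map_smul, map_smul,
          Dmap_single_neg _ _ _ _ _ _ (fun hc => (Finset.notMem_erase x s.1) hc.1)]
        simp
      have e1 : Λ.boundary K (q+1) (Dmap K Λ x y dom (q+1) (Finsupp.single s 1)) =
          ((-1:K) ^ (s.1.filter (fun z => z < y)).card) •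
            ∑ v ∈ insert y s.1, eterm K Λ (q+1) (insert y s.1) v := by
        rw [Dmap_single_pos Λ x y dom (q+1) s hx hy, one_mul, map_smul,
          boundary_single' Λ (q+1) ht htc 1, one_smul]
      have e2 : Λ.boundary K q (Finsupp.single s (1:K)) = ∑ v ∈ s.1, eterm K Λ q s.1 v := by
        rw [boundary_single, one_smul]
      rw [e1, e2, rho_single_mem _ s hx]
      simp only [map_smul, map_sum]
      rw [Finset.sum_insert hy,
        ← Finset.sum_erase_add s.1
          (fun v => rho K Λ x (q+1) (eterm K Λ (q+1) (insert y s.1) v)) hx,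
        ← Finset.sum_erase_add s.1
          (fun v => rho K Λ x (q+1) (Dmap K Λ x y dom q (eterm K Λ q s.1 v))) hx,
        hrx, hry, hdx, add_zero, add_zero]
      rw [smul_add, smul_smul, ← pow_add, Even.neg_one_pow ⟨_, rfl⟩, one_smul,
        Finset.smul_sum, add_assoc, ← Finset.sum_add_distrib]
      have hcancel : ∀ v ∈ s.1.erase x,
          ((-1:K) ^ (s.1.filter (fun z => z < y)).card) •
              rho K Λ x (q+1) (eterm K Λ (q+1) (insert y s.1) v)
            + rho K Λ x (q+1) (Dmap K Λ x y dom q (eterm K Λ q s.1 v)) = 0 := by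
        intro v hv
        obtain ⟨hvx, hvs⟩ := Finset.mem_erase.1 hv
        have hvy : v ≠ y := fun h => hy (h ▸ hvs)
        have hface1 : s.1.erase v ∈ Λ.faces ∧ (s.1.erase v).card = q :=
          ⟨Λ.down_closed s.2.1 (Finset.erase_subset _ _), by
            simp [Finset.card_erase_of_mem hvs, s.2.2]⟩
        have hxe : x ∈ s.1.erase v := Finset.mem_erase.2 ⟨Ne.symm hvx, hx⟩
        have hye : y ∉ s.1.erase v := fun h => hy (Finset.mem_of_mem_erase h)
        have t1 : rho K Λ x (q+1) (Dmap K Λ x y dom q (eterm K Λ q s.1 v)) =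
            (((-1:K) ^ (s.1.filter (fun z => z < v)).card) *
              ((-1:K) ^ ((s.1.erase v).filter (fun z => z < y)).card)) •
              Finsupp.single (⟨insert y (s.1.erase v), dom _ hface1.1 hxe, by
                rw [Finset.card_insert_of_notMem hye, hface1.2]⟩ : Λ.Face (q+1)) 1 := by
          rw [eterm_of_mem Λ q s.2.1 s.2.2 hvs, map_smul, map_smul,
            Dmap_single_pos Λ x y dom q ⟨s.1.erase v, hface1⟩ hxe hye, one_mul,
            map_smul, rho_single_mem _ _ (Finset.mem_insert_of_mem hxe), smul_smul]
        have t2 : rho K Λ x (q+1) (eterm K Λ (q+1) (insert y s.1) v) =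
            ((-1:K) ^ (((insert y s.1)).filter (fun z => z < v)).card) •
              Finsupp.single (⟨insert y (s.1.erase v), dom _ hface1.1 hxe, by
                rw [Finset.card_insert_of_notMem hye, hface1.2]⟩ : Λ.Face (q+1)) 1 := by
          rw [eterm_of_mem Λ (q+1) ht htc (Finset.mem_insert_of_mem hvs), map_smul]
          rw [rho_single_mem _ _
            (Finset.mem_erase.2 ⟨Ne.symm hvx, Finset.mem_insert_of_mem hx⟩)]
          exact smul_single_eq' (erase_insert_of_ne' hvy) _ _ rfl
        rw [t1, t2, smul_smul, ← add_smul,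
          sign_cancel' hvy (filter_lt_erase_card hvs y) (filter_lt_insert_card hy v),
          zero_smul]
      rw [Finset.sum_eq_zero hcancel, add_zero]
  · -- x ∉ s
    rw [rho_single_not_mem _ s hx,
      Dmap_single_neg _ _ _ _ _ s (fun hc => hx hc.1), map_zero, map_zero, zero_add]
    rw [boundary_single, one_smul, map_sum, map_sum]
    rw [Finset.sum_eq_zero]
    intro v hv
    rw [eterm_of_mem Λ q s.2.1 s.2.2 hv, map_smul, map_smul,
      Dmap_single_neg _ _ _ _ _ _ (fun hc => hx (Finset.mem_of_mem_erase hc.1))]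
    simp

end AbstractComplex
namespace AbstractComplex

variable {V : Type*} [LinearOrder V] {K : Type*} [Field K]

lemma ext' {Λ₁ Λ₂ : AbstractComplex V} (h : Λ₁.faces = Λ₂.faces) : Λ₁ = Λ₂ := by
  cases Λ₁; cases Λ₂; simpa using h

lemma step (Λ Λ' : AbstractComplex V) (x y : V) (hxy : x ≠ y)
    (hfaces : Λ'.faces = {s | s ∈ Λ.faces ∧ x ∉ s})
    (dom : ∀ s ∈ Λ.faces, x ∈ s → insert y s ∈ Λ.faces)
    (i : ℕ) (h : LinearMap.ker (Λ.boundary K i) ≤ LinearMap.range (Λ.boundary K (i+1))) :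
    LinearMap.ker (Λ'.boundary K i) ≤ LinearMap.range (Λ'.boundary K (i+1)) := by
  have hsub : Λ'.faces ⊆ Λ.faces := by rw [hfaces]; exact fun s hs => hs.1
  intro z' hz'
  rw [LinearMap.mem_ker] at hz'
  have hz : Λ.boundary K i (incl K hsub (i+1) z') = 0 := by
    have hc := congrArg (fun f => f z') (incl_boundary (K := K) hsub i)
    simp only [LinearMap.comp_apply] at hc
    rw [hc, hz', map_zero]
  obtain ⟨w, hw⟩ := h (LinearMap.mem_ker.2 hz)
  have hDz : Dmap K Λ x y dom (i+1) (Λ.boundary K (i+1) w) = 0 := by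
    rw [hw]
    have hc := congrArg (fun f => f z') (Dmap_incl (K := K) x y hfaces dom hsub (i+1))
    simpa using hc
  set u := w - Λ.boundary K (i+2) (Dmap K Λ x y dom (i+2) w) with hu
  have hrho : rho K Λ x (i+2) u = 0 := by
    have hki := congrArg (fun f => f w) (key_identity Λ x y hxy dom (i+1))
    simp only [LinearMap.comp_apply, LinearMap.add_apply, map_add] at hki
    rw [hDz, map_zero, add_zero] at hki
    rw [hu, map_sub, hki, sub_self]
  have hu2 : incl K hsub (i+2) (proj K x hfaces (i+2) u) = u := by
    have hc := congrArg (fun f => f u) (incl_proj_add_rho (K := K) x hfaces (i+2))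
    simp only [LinearMap.add_apply, LinearMap.comp_apply, LinearMap.id_apply] at hc
    rw [hrho, add_zero] at hc
    exact hc
  refine ⟨proj K x hfaces (i+2) u, ?_⟩
  apply incl_injective hsub (i+1)
  have hcomm := congrArg (fun f => f (proj K x hfaces (i+2) u))
    (incl_boundary (K := K) hsub (i+1))
  simp only [LinearMap.comp_apply] at hcomm
  rw [← hcomm, hu2, hu, map_sub]
  rw [boundary_boundary Λ (i+1) (Dmap K Λ x y dom (i+2) w), sub_zero, hw]

/-- The subcomplex of faces avoiding a set `S` of vertices. -/
def avoid (Λ : AbstractComplex V) (S : Finset V) : AbstractComplex V where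
  faces := {s | s ∈ Λ.faces ∧ ∀ v ∈ S, v ∉ s}
  down_closed := fun h hts =>
    ⟨Λ.down_closed h.1 hts, fun v hv hvs => h.2 v hv (hts hvs)⟩

lemma avoid_hom (Λ : AbstractComplex V) (S : Finset V)
    (hS : ∀ x ∈ S, ∃ r, r ∉ S ∧ ∀ s ∈ Λ.faces, x ∈ s → insert r s ∈ Λ.faces)
    (i : ℕ) (h : LinearMap.ker (Λ.boundary K i) ≤ LinearMap.range (Λ.boundary K (i+1))) :
    LinearMap.ker ((avoid Λ S).boundary K i) ≤
      LinearMap.range ((avoid Λ S).boundary K (i+1)) := by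
  induction S using Finset.induction_on with
  | empty =>
    have he : avoid Λ ∅ = Λ := ext' (by ext s; simp [avoid])
    rw [he]; exact h
  | @insert a S₀ ha ih =>
    obtain ⟨r, hrS, hdom⟩ := hS a (Finset.mem_insert_self a S₀)
    have hra : a ≠ r := fun hc => hrS (hc ▸ Finset.mem_insert_self a S₀)
    refine step (avoid Λ S₀) (avoid Λ (insert a S₀)) a r hra ?_ ?_ i ?_
    · ext s
      simp only [avoid, Set.mem_setOf_eq, Finset.mem_insert]
      constructor
      · rintro ⟨h1, h2⟩
        exact ⟨⟨h1, fun v hv => h2 v (Or.inr hv)⟩, h2 a (Or.inl rfl)⟩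
      · rintro ⟨⟨h1, h2⟩, h3⟩
        refine ⟨h1, fun v hv => ?_⟩
        rcases hv with rfl | hv
        · exact h3
        · exact h2 v hv
    · rintro s ⟨hs1, hs2⟩ has
      refine ⟨hdom s hs1 has, fun v hv hvmem => ?_⟩
      rcases Finset.mem_insert.1 hvmem with rfl | hvm
      · exact hrS (Finset.mem_insert_of_mem hv)
      · exact hs2 v hv hvm
    · refine ih (fun x hx => ?_)
      obtain ⟨r', hr', hdom'⟩ := hS x (Finset.mem_insert_of_mem hx)
      exact ⟨r', fun hc => hr' (Finset.mem_insert_of_mem hc), hdom'⟩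

end AbstractComplex
namespace AbstractComplex

variable {K : Type*} [Field K]

lemma filter_lt_image_card {V₁ V₂ : Type*} [LinearOrder V₁] [LinearOrder V₂]
    {e : V₁ → V₂} (he : StrictMono e) (s : Finset V₁) (v : V₁) :
    ((s.image e).filter (fun z => z < e v)).card = (s.filter (fun z => z < v)).card := by
  classical
  have himg : (s.image e).filter (fun z => z < e v) = (s.filter (fun z => z < v)).image e := by
    ext w
    simp only [Finset.mem_filter, Finset.mem_image]
    constructor
    · rintro ⟨⟨u, hu, rfl⟩, hlt⟩
      exact ⟨u, ⟨hu, he.lt_iff_lt.1 hlt⟩, rfl⟩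
    · rintro ⟨u, ⟨hu, hlt⟩, rfl⟩
      exact ⟨⟨u, hu, rfl⟩, he.lt_iff_lt.2 hlt⟩
  rw [himg, Finset.card_image_of_injective _ he.injective]

lemma transfer {V₁ V₂ : Type*} [LinearOrder V₁] [LinearOrder V₂]
    (e : V₁ → V₂) (he : StrictMono e)
    (Λ₁ : AbstractComplex V₁) (Λ₂ : AbstractComplex V₂)
    (hface : ∀ s : Finset V₁, s ∈ Λ₁.faces ↔ s.image e ∈ Λ₂.faces)
    (hsurj : ∀ t ∈ Λ₂.faces, ∃ s ∈ Λ₁.faces, t = s.image e)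
    (i : ℕ)
    (h : LinearMap.ker (Λ₂.boundary K i) ≤ LinearMap.range (Λ₂.boundary K (i+1))) :
    LinearMap.ker (Λ₁.boundary K i) ≤ LinearMap.range (Λ₁.boundary K (i+1)) := by
  classical
  have hbij : ∀ q : ℕ, Function.Bijective
      (fun s : Λ₁.Face q => (⟨s.1.image e, (hface s.1).1 s.2.1, by
        rw [Finset.card_image_of_injective _ he.injective, s.2.2]⟩ : Λ₂.Face q)) := by
    intro q
    constructor
    · intro a b hab
      apply Subtype.ext
      apply Finset.image_injective he.injective
      exact Subtype.mk_eq_mk.1 hab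
    · rintro ⟨t, ht, htc⟩
      obtain ⟨s, hs, rfl⟩ := hsurj t ht
      refine ⟨⟨s, hs, ?_⟩, rfl⟩
      rwa [Finset.card_image_of_injective _ he.injective] at htc
  let E : ∀ q : ℕ, Λ₁.Face q ≃ Λ₂.Face q := fun q => Equiv.ofBijective _ (hbij q)
  let L : ∀ q : ℕ, (Λ₁.Face q →₀ K) ≃ₗ[K] (Λ₂.Face q →₀ K) :=
    fun q => Finsupp.domLCongr (E q)
  have hcomm : ∀ q : ℕ, (Λ₂.boundary K q) ∘ₗ (L (q+1) : _ →ₗ[K] _)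
      = (L q : _ →ₗ[K] _) ∘ₗ Λ₁.boundary K q := by
    intro q
    apply Finsupp.lhom_ext
    intro s k
    simp only [LinearMap.comp_apply, LinearEquiv.coe_coe]
    have hLs : (L (q+1)) (Finsupp.single s k) = Finsupp.single (E (q+1) s) k :=
      Finsupp.domLCongr_single _ _ _
    rw [hLs]
    have him : ((E (q+1) s : Λ₂.Face (q+1)) : Finset V₂) = s.1.image e := rfl
    rw [boundary_single Λ₂ q (E (q+1) s) k, boundary_single Λ₁ q s k, map_smul]
    congr 1
    rw [map_sum, him, Finset.sum_image (fun a _ b _ hab => he.injective hab)]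
    refine Finset.sum_congr rfl fun v hv => ?_
    have hv2 : e v ∈ s.1.image e := Finset.mem_image_of_mem e hv
    have hmem2 : s.1.image e ∈ Λ₂.faces := (hface s.1).1 s.2.1
    have hcard2 : (s.1.image e).card = q + 1 := by
      rw [Finset.card_image_of_injective _ he.injective, s.2.2]
    rw [eterm_of_mem Λ₂ q hmem2 hcard2 hv2, eterm_of_mem Λ₁ q s.2.1 s.2.2 hv, map_smul]
    rw [filter_lt_image_card he s.1 v]
    congr 1
    simp only [L, Finsupp.domLCongr_single]
    refine single_congr ?_ 1
    show ((s.1.image e).erase (e v) : Finset V₂) = (s.1.erase v).image e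
    ext w
    simp only [Finset.mem_image, Finset.mem_erase]
    constructor
    · rintro ⟨hne, u, hu, rfl⟩
      exact ⟨u, ⟨fun hc => hne (hc ▸ rfl), hu⟩, rfl⟩
    · rintro ⟨u, ⟨huv, hu⟩, rfl⟩
      exact ⟨fun hc => huv (he.injective hc), u, hu, rfl⟩
  intro z hz
  rw [LinearMap.mem_ker] at hz
  have hz2 : (L (i+1)) z ∈ LinearMap.ker (Λ₂.boundary K i) := by
    rw [LinearMap.mem_ker]
    have hc := congrArg (fun f => f z) (hcomm i)
    simp only [LinearMap.comp_apply, LinearEquiv.coe_coe] at hc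
    rw [hc, hz, map_zero]
  obtain ⟨w, hw⟩ := h hz2
  refine ⟨(L (i+2)).symm w, ?_⟩
  apply (L (i+1)).injective
  have hc := congrArg (fun f => f ((L (i+2)).symm w)) (hcomm (i+1))
  simp only [LinearMap.comp_apply, LinearEquiv.coe_coe] at hc
  rw [← hc, LinearEquiv.apply_symm_apply, hw]

variable {V : Type*} [LinearOrder V]

lemma rhtriv_negone (Λ : AbstractComplex V) (v : V) (hv : {v} ∈ Λ.faces) :
    ⊤ ≤ LinearMap.range (Λ.boundary K 0) := by
  classical
  intro c _
  have hvc : ({v} : Finset V).card = 0 + 1 := Finset.card_singleton v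
  have hemp : (∅ : Finset V) ∈ Λ.faces := Λ.down_closed hv (Finset.empty_subset _)
  set a : Λ.Face 0 := ⟨∅, hemp, Finset.card_empty⟩ with hadef
  have hall : ∀ b : Λ.Face 0, b = a := fun b => Subtype.ext (Finset.card_eq_zero.1 b.2.2)
  have hbd : Λ.boundary K 0 (Finsupp.single ⟨{v}, hv, hvc⟩ (c a)) = c := by
    rw [boundary_single]
    rw [Finset.sum_singleton]
    rw [eterm_of_mem Λ 0 hv hvc (Finset.mem_singleton_self v)]
    have hfe : ({v} : Finset V).filter (fun z => z < v) = ∅ := by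
      ext w
      simp only [Finset.mem_filter, Finset.mem_singleton, Finset.notMem_empty,
        iff_false, not_and]
      rintro rfl
      exact lt_irrefl w
    rw [hfe, Finset.card_empty, pow_zero, one_smul]
    ext b
    rw [hall b]
    rw [Finsupp.smul_apply, Finsupp.single_apply,
      if_pos (Subtype.ext (Finset.erase_singleton v) :
        (⟨({v} : Finset V).erase v, Λ.down_closed hv (Finset.erase_subset _ _), by
          simp⟩ : Λ.Face 0) = a), smul_eq_mul, mul_one]
  exact ⟨_, hbd⟩

lemma exists_facet [Fintype V] (Δ : AbstractComplex V) {s : Finset V} (hs : s ∈ Δ.faces) :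
    ∃ F, Δ.IsFacet F ∧ s ⊆ F := by
  classical
  obtain ⟨F, ⟨hF1, hF2⟩, hmax⟩ := Set.Finite.exists_maximalFor (fun t : Finset V => t.card)
    {t | t ∈ Δ.faces ∧ s ⊆ t} (Set.toFinite _) ⟨s, hs, subset_rfl⟩
  refine ⟨F, ⟨hF1, fun t ht hFt => ?_⟩, hF2⟩
  exact Finset.eq_of_subset_of_card_le hFt
    (hmax ⟨ht, hF2.trans hFt⟩ (Finset.card_le_card hFt))

end AbstractComplex
/-- the contraction of a Cohen–Macaulay simplicial complex is
Cohen–Macaulay. -/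
theorem contraction_cm (K : Type*) [Field K] {V : Type*} [Fintype V] [LinearOrder V]
    (Δ : AbstractComplex V) (h : AbstractComplex.IsCM K Δ) :
    AbstractComplex.IsCM K Δ.contraction := by
  intro σ hσ i hdim
  have hclass : ∀ {x₁ x₂ : V}, Quotient.mk Δ.contractSetoid x₁ = Quotient.mk Δ.contractSetoid x₂ →
      ∀ F : Finset V, Δ.IsFacet F → (x₁ ∈ F ↔ x₂ ∈ F) := fun {x₁ x₂} hx => Quotient.exact hx
  set P : Finset V := Finset.univ.filter (fun v => Quotient.mk Δ.contractSetoid v ∈ σ) with hPdef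
  have hPmem : ∀ v : V, v ∈ P ↔ Quotient.mk Δ.contractSetoid v ∈ σ := by
    intro v; simp [hPdef]
  obtain ⟨F, hF, hFσ⟩ := hσ
  have hPF : ∀ (F' : Finset V), Δ.IsFacet F' →
      (∀ y ∈ σ, ∃ x ∈ F', Quotient.mk Δ.contractSetoid x = y) → P ⊆ F' := by
    intro F' hF' hy v hv
    rw [hPmem] at hv
    obtain ⟨x, hxF, hx⟩ := hy _ hv
    exact (hclass hx F' hF').1 hxF
  have hP : P ∈ Δ.faces := Δ.down_closed hF.1 (hPF F hF hFσ)
  have hout : ∀ y : Quotient Δ.contractSetoid, Quotient.mk Δ.contractSetoid (Quotient.out y) = y :=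
    fun y => Quotient.out_eq y
  have he : @StrictMono (Quotient Δ.contractSetoid) V (quotLinearOrder).toPreorder _
      (Quotient.out : Quotient Δ.contractSetoid → V) := fun a b hab => hab
  set S : Finset V :=
    Finset.univ.filter (fun v => (Quotient.mk Δ.contractSetoid v).out ≠ v) with hSdef
  have hSmem : ∀ v : V, v ∈ S ↔ (Quotient.mk Δ.contractSetoid v).out ≠ v := by
    intro v; simp [hSdef]
  have houtS : ∀ y : Quotient Δ.contractSetoid, Quotient.out y ∉ S := by
    intro y hy
    rw [hSmem, hout y] at hy
    exact hy rfl
  -- face correspondence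
  have hface : ∀ τ : Finset (Quotient Δ.contractSetoid), τ ∈ ((Δ.contraction).link σ).faces ↔
      (τ.image Quotient.out) ∈ ((Δ.link P).avoid S).faces := by
    intro τ
    constructor
    · rintro ⟨hdisj, F', hF', hmap⟩
      have hfull : ∀ y ∈ τ ∪ σ, ∀ x : V, Quotient.mk Δ.contractSetoid x = y → x ∈ F' := by
        intro y hy x hx
        obtain ⟨x₀, hx₀F, hx₀⟩ := hmap y hy
        exact (hclass (hx.trans hx₀.symm) F' hF').2 hx₀F
      have hsubF : τ.image Quotient.out ∪ P ⊆ F' := by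
        intro v hv
        rcases Finset.mem_union.1 hv with hv | hv
        · obtain ⟨y, hyτ, rfl⟩ := Finset.mem_image.1 hv
          exact hfull y (Finset.mem_union_left _ hyτ) _ (hout y)
        · exact hfull _ (Finset.mem_union_right _ ((hPmem v).1 hv)) v rfl
      refine ⟨⟨?_, Δ.down_closed hF'.1 hsubF⟩, ?_⟩
      · rw [Finset.eq_empty_iff_forall_notMem]
        rintro v hv
        obtain ⟨hv1, hv2⟩ := Finset.mem_inter.1 hv
        obtain ⟨y, hyτ, rfl⟩ := Finset.mem_image.1 hv1
        have : y ∈ σ := by rw [← hout y]; exact (hPmem _).1 hv2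
        have : y ∈ τ ∩ σ := Finset.mem_inter.2 ⟨hyτ, this⟩
        rw [hdisj] at this
        exact Finset.notMem_empty _ this
      · intro v hvS hvτ
        obtain ⟨y, _, rfl⟩ := Finset.mem_image.1 hvτ
        exact houtS y hvS
    · rintro ⟨⟨hdisj2, hunion⟩, hS2⟩
      refine ⟨?_, ?_⟩
      · rw [Finset.eq_empty_iff_forall_notMem]
        intro y hy
        obtain ⟨hy1, hy2⟩ := Finset.mem_inter.1 hy
        have h1 : Quotient.out y ∈ τ.image Quotient.out := Finset.mem_image_of_mem _ hy1
        have h2 : Quotient.out y ∈ P := (hPmem _).2 (by rw [hout y]; exact hy2)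
        have : Quotient.out y ∈ (τ.image Quotient.out) ∩ P := Finset.mem_inter.2 ⟨h1, h2⟩
        rw [hdisj2] at this
        exact Finset.notMem_empty _ this
      · obtain ⟨F₂, hF₂, hsub₂⟩ := Δ.exists_facet hunion
        refine ⟨F₂, hF₂, ?_⟩
        intro y hy
        rcases Finset.mem_union.1 hy with hy | hy
        · exact ⟨Quotient.out y,
            hsub₂ (Finset.mem_union_left _ (Finset.mem_image_of_mem _ hy)), hout y⟩
        · exact ⟨Quotient.out y,
            hsub₂ (Finset.mem_union_right _ ((hPmem _).2 (by rw [hout y]; exact hy))), hout y⟩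
  have hsurj : ∀ t ∈ ((Δ.link P).avoid S).faces,
      ∃ τ ∈ ((Δ.contraction).link σ).faces, t = τ.image Quotient.out := by
    rintro t ⟨⟨hdisj, hunion⟩, hSt⟩
    refine ⟨t.image (Quotient.mk Δ.contractSetoid), ?_, ?_⟩
    · rw [hface]
      have ht : (t.image (Quotient.mk Δ.contractSetoid)).image Quotient.out = t := by
        rw [Finset.image_image]
        have : ∀ x ∈ t, (Function.comp Quotient.out (Quotient.mk Δ.contractSetoid)) x = x := by
          intro x hx
          by_contra hc
          exact hSt x ((hSmem x).2 hc) hx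
        rw [Finset.image_congr (fun x hx => this x hx), Finset.image_id']
      rw [ht]
      exact ⟨⟨hdisj, hunion⟩, hSt⟩
    · rw [Finset.image_image]
      have : ∀ x ∈ t, (Function.comp Quotient.out (Quotient.mk Δ.contractSetoid)) x = x := by
        intro x hx
        by_contra hc
        exact hSt x ((hSmem x).2 hc) hx
      rw [Finset.image_congr (fun x hx => this x hx), Finset.image_id']
  -- domination hypothesis for removing non-representatives
  have hdom : ∀ x ∈ S, ∃ r, r ∉ S ∧
      ∀ s ∈ (Δ.link P).faces, x ∈ s → insert r s ∈ (Δ.link P).faces := by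
    intro x hxS
    refine ⟨(Quotient.mk Δ.contractSetoid x).out, houtS _, ?_⟩
    rintro s ⟨hsd, hsu⟩ hxs
    obtain ⟨F₄, hF₄, hsub₄⟩ := Δ.exists_facet hsu
    set r := (Quotient.mk Δ.contractSetoid x).out with hrdef
    have hrx : Quotient.mk Δ.contractSetoid r = Quotient.mk Δ.contractSetoid x := hout _
    have hrF : r ∈ F₄ :=
      (hclass hrx F₄ hF₄).2 (hsub₄ (Finset.mem_union_left _ hxs))
    have hrP : r ∉ P := by
      intro hc
      have hxP : x ∈ P := (hPmem x).2 (by rw [← hrx]; exact (hPmem r).1 hc)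
      have : x ∈ s ∩ P := Finset.mem_inter.2 ⟨hxs, hxP⟩
      rw [hsd] at this
      exact Finset.notMem_empty _ this
    constructor
    · rw [Finset.eq_empty_iff_forall_notMem]
      intro v hv
      obtain ⟨hv1, hv2⟩ := Finset.mem_inter.1 hv
      rcases Finset.mem_insert.1 hv1 with rfl | hv1
      · exact hrP hv2
      · have : v ∈ s ∩ P := Finset.mem_inter.2 ⟨hv1, hv2⟩
        rw [hsd] at this
        exact Finset.notMem_empty _ this
    · refine Δ.down_closed hF₄.1 ?_
      intro v hv
      rcases Finset.mem_union.1 hv with hv | hv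
      · rcases Finset.mem_insert.1 hv with rfl | hv
        · exact hrF
        · exact hsub₄ (Finset.mem_union_left _ hv)
      · exact hsub₄ (Finset.mem_union_right _ hv)
  -- case analysis on the degree
  cases i with
  | ofNat n =>
    simp only [AbstractComplex.RHTriv]
    show LinearMap.ker (((Δ.contraction).link σ).boundary K n) ≤
      LinearMap.range (((Δ.contraction).link σ).boundary K (n + 1))
    have hdim2 : (Δ.link P).dimLT (Int.ofNat n) := by
      obtain ⟨τ, hτ, hτc⟩ := hdim
      refine ⟨τ.image Quotient.out, ((hface τ).1 hτ).1, ?_⟩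
      rwa [Finset.card_image_of_injective _ he.injective]
    have hΛ : LinearMap.ker ((Δ.link P).boundary K n) ≤
        LinearMap.range ((Δ.link P).boundary K (n + 1)) := h P hP (Int.ofNat n) hdim2
    exact AbstractComplex.transfer (Quotient.out : Quotient Δ.contractSetoid → V) he _ _ hface hsurj n
      (AbstractComplex.avoid_hom (Δ.link P) S hdom n hΛ)
  | negSucc n =>
    cases n with
    | zero =>
      simp only [AbstractComplex.RHTriv]
      show ⊤ ≤ LinearMap.range (((Δ.contraction).link σ).boundary K 0)
      obtain ⟨τ, hτ, hτc⟩ := hdim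
      have hne : τ.Nonempty := by
        rw [← Finset.card_pos]
        have h1 : (Int.negSucc 0) = -1 := rfl
        rw [h1] at hτc
        omega
      obtain ⟨y, hy⟩ := hne
      exact AbstractComplex.rhtriv_negone _ y
        (((Δ.contraction).link σ).down_closed hτ (Finset.singleton_subset_iff.2 hy))
    | succ n => trivial
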